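/- End-to-end correctness of 2-SMIN: let ℓ, σ be natural numbers and N a natural number with N > 2^(σ+ℓ+3); let x, y be integers with |x| ≤ 2^ℓ and |y| ≤ 2^ℓ, let r₁ be an integer with 1 ≤ r₁ < 2^σ, and let r₂ be an integer with 0 < r₂, 2·r₂ ≤ N, and 2·(r₁ + r₂) > N. For π ∈ {0,1} define D_π = (r₁·(x − y + 1) + r₂) mod N if π = 0 and D_π = (r₁·(y − x) + r₂) mod N if π = 1; define d₀ = y if 2·D_π > N and d₀ = x otherwise; and define the output as d₀ if π = 0 and as x + y − d₀ if π = 1. Then for both values of π the output equals min(x, y). -/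
import Mathlib


/-- End-to-end correctness of the 2-SMIN protocol: for both values of the
random bit `π`, the output equals `min(x, y)`. -/
theorem twoSMIN_correct (ℓ σ N : ℕ) (hN : 2 ^ (σ + ℓ + 3) < N)
    (x y : ℤ) (hx : |x| ≤ 2 ^ ℓ) (hy : |y| ≤ 2 ^ ℓ)
    (r₁ : ℤ) (hr₁ : 1 ≤ r₁) (hr₁' : r₁ < 2 ^ σ)
    (r₂ : ℤ) (hr₂ : 0 < r₂) (hr₂' : 2 * r₂ ≤ (N : ℤ))
    (hsum : (N : ℤ) < 2 * (r₁ + r₂)) :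
    ∀ π : Fin 2,
      (fun out => out = min x y)
        (let D : ℤ := if π = 0 then (r₁ * (x - y + 1) + r₂) % (N : ℤ)
                      else (r₁ * (y - x) + r₂) % (N : ℤ)
         let d₀ : ℤ := if 2 * D > (N : ℤ) then y else x
         if π = 0 then d₀ else x + y - d₀) := by
  have hN' : (2:ℤ) ^ (σ + ℓ + 3) < N := by exact_mod_cast hN
  have hkey : (2:ℤ) ^ σ * 2 ^ ℓ * 8 < N := by
    rw [pow_add, pow_add] at hN'; norm_num at hN'; linarith
  have hA : (1:ℤ) ≤ 2 ^ ℓ := one_le_pow₀ (by norm_num)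
  have hB : (1:ℤ) ≤ 2 ^ σ := one_le_pow₀ (by norm_num)
  obtain ⟨hx1, hx2⟩ := abs_le.mp hx
  obtain ⟨hy1, hy2⟩ := abs_le.mp hy
  intro π
  fin_cases π <;> simp only [Fin.isValue, if_true, if_false]
  · -- π = 0
    simp only [show ((⟨0, by norm_num⟩ : Fin 2) = 0) from rfl, if_true]
    rcases le_or_gt y x with hle | hlt
    · have h0 : 0 ≤ r₁ * (x - y + 1) + r₂ := by nlinarith
      have h1 : r₁ * (x - y + 1) + r₂ < N := by nlinarith
      rw [Int.emod_eq_of_lt h0 h1, if_pos (by nlinarith), min_eq_right hle]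
    · have h0 : 0 ≤ r₁ * (x - y + 1) + r₂ := by nlinarith
      have h1 : r₁ * (x - y + 1) + r₂ < N := by nlinarith
      rw [Int.emod_eq_of_lt h0 h1, if_neg (by push_neg; nlinarith),
        min_eq_left hlt.le]
  · -- π = 1
    simp only [show ¬((⟨1, by norm_num⟩ : Fin 2) = 0) from by decide, if_false]
    rcases le_or_gt y x with hle | hlt
    · have h0 : 0 ≤ r₁ * (y - x) + r₂ := by nlinarith
      have h1 : r₁ * (y - x) + r₂ < N := by nlinarith
      rw [Int.emod_eq_of_lt h0 h1, if_neg (by push_neg; nlinarith),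
        min_eq_right hle]
      ring
    · have h0 : 0 ≤ r₁ * (y - x) + r₂ := by nlinarith
      have h1 : r₁ * (y - x) + r₂ < N := by nlinarith
      rw [Int.emod_eq_of_lt h0 h1, if_pos (by nlinarith), min_eq_left hlt.le]
      ring
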